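/- Let j : ℂ⁴ → ℂ⁴ be the conjugate-linear map j(z₁,z₂,z₃,z₄) = (−conj z₃, conj z₄, conj z₁, −conj z₂) (a quaternionic structure: j ∘ j = −id). Then for all v₁, v₂ ∈ ℂ⁴, the determinant of the 4×4 complex matrix whose columns are v₁, v₂, j v₁, j v₂ is a real number that is ≤ 0, and it is < 0 whenever v₁, v₂, j v₁, j v₂ are linearly independent over ℂ. (This sign-constancy underlies the normalization det(v₁,v₂,jv₁,jv₂) > 0 for the determinant form det with det ∘ ∧⁴j conjugate to det, used to define the metric (v₁∧v₂, v₃∧v₄) := −det(v₁,v₂,v₃,v₄) on ∧²ℂ⁴.) -/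

import Mathlib

/-- The quaternionic structure on `ℂ⁴ ≅ ℍ²`:
`j(z₁,z₂,z₃,z₄) = (-conj z₃, conj z₄, conj z₁, -conj z₂)`. -/
noncomputable def Jq (v : Fin 4 → ℂ) : Fin 4 → ℂ :=
  ![-(starRingEnd ℂ) (v 2), (starRingEnd ℂ) (v 3), (starRingEnd ℂ) (v 0),
    -(starRingEnd ℂ) (v 1)]

private theorem det_fin_four' (A : Matrix (Fin 4) (Fin 4) ℂ) :
    A.det =
      A 0 0 * (A 1 1 * A 2 2 * A 3 3 - A 1 1 * A 2 3 * A 3 2 - A 1 2 * A 2 1 * A 3 3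
        + A 1 2 * A 2 3 * A 3 1 + A 1 3 * A 2 1 * A 3 2 - A 1 3 * A 2 2 * A 3 1)
      - A 0 1 * (A 1 0 * A 2 2 * A 3 3 - A 1 0 * A 2 3 * A 3 2 - A 1 2 * A 2 0 * A 3 3
        + A 1 2 * A 2 3 * A 3 0 + A 1 3 * A 2 0 * A 3 2 - A 1 3 * A 2 2 * A 3 0)
      + A 0 2 * (A 1 0 * A 2 1 * A 3 3 - A 1 0 * A 2 3 * A 3 1 - A 1 1 * A 2 0 * A 3 3
        + A 1 1 * A 2 3 * A 3 0 + A 1 3 * A 2 0 * A 3 1 - A 1 3 * A 2 1 * A 3 0)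
      - A 0 3 * (A 1 0 * A 2 1 * A 3 2 - A 1 0 * A 2 2 * A 3 1 - A 1 1 * A 2 0 * A 3 2
        + A 1 1 * A 2 2 * A 3 0 + A 1 2 * A 2 0 * A 3 1 - A 1 2 * A 2 1 * A 3 0) := by
  rw [Matrix.det_succ_row_zero, Fin.sum_univ_four]
  simp [Matrix.det_fin_three, Matrix.submatrix_apply, Fin.succAbove, Fin.lt_def,
    show (Fin.succ 2 : Fin 4) = 3 from rfl, show (Fin.castSucc 2 : Fin 4) = 2 from rfl,
    show ((3 : Fin 4) : ℕ) = 3 from rfl, show ((0 : Fin 3) : ℕ) = 0 from rfl,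
    show ((1 : Fin 3) : ℕ) = 1 from rfl, show ((2 : Fin 3) : ℕ) = 2 from rfl]
  ring

/-- The determinant of the matrix with columns `v₁, v₂, j v₁, j v₂` is a real number
`≤ 0`, and it is `< 0` whenever the four columns are linearly independent. -/
theorem statement15 (v₁ v₂ : Fin 4 → ℂ) :
    ∃ r : ℝ,
      (Matrix.of fun i k : Fin 4 => ![v₁, v₂, Jq v₁, Jq v₂] k i).det = (r : ℂ) ∧
        r ≤ 0 ∧
        (LinearIndependent ℂ ![v₁, v₂, Jq v₁, Jq v₂] → r < 0) := by
  set p01 := v₁ 0 * v₂ 1 - v₁ 1 * v₂ 0 with hp01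
  set p02 := v₁ 0 * v₂ 2 - v₁ 2 * v₂ 0 with hp02
  set p03 := v₁ 0 * v₂ 3 - v₁ 3 * v₂ 0 with hp03
  set p12 := v₁ 1 * v₂ 2 - v₁ 2 * v₂ 1 with hp12
  set p13 := v₁ 1 * v₂ 3 - v₁ 3 * v₂ 1 with hp13
  set p23 := v₁ 2 * v₂ 3 - v₁ 3 * v₂ 2 with hp23
  set r : ℝ := -(Complex.normSq p01 + Complex.normSq p23 + Complex.normSq p03 +
      Complex.normSq p12 + 2 * ((starRingEnd ℂ) p02 * p13).re) with hr
  have hdet : (Matrix.of fun i k : Fin 4 => ![v₁, v₂, Jq v₁, Jq v₂] k i).det = (r : ℂ) := by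
    have h1 : (Matrix.of fun i k : Fin 4 => ![v₁, v₂, Jq v₁, Jq v₂] k i).det =
        -((starRingEnd ℂ) p01 * p01 + (starRingEnd ℂ) p23 * p23 + (starRingEnd ℂ) p03 * p03 +
          (starRingEnd ℂ) p12 * p12 +
          ((starRingEnd ℂ) p02 * p13 + (starRingEnd ℂ) ((starRingEnd ℂ) p02 * p13))) := by
      simp only [hp01, hp02, hp03, hp12, hp13, hp23]
      rw [det_fin_four']
      simp only [Matrix.of_apply, Jq, Matrix.cons_val_zero, Matrix.cons_val_one,
        Matrix.head_cons, Matrix.cons_val_two, Matrix.tail_cons, Matrix.cons_val_three,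
        map_sub, map_mul, Complex.conj_conj]
      ring
    rw [h1, Complex.add_conj, hr]
    have h2 : ∀ z : ℂ, (starRingEnd ℂ) z * z = (Complex.normSq z : ℂ) := by
      intro z; rw [mul_comm, Complex.mul_conj]
    rw [h2, h2, h2, h2]
    push_cast
    ring
  have hle : r ≤ 0 := by
    have hpl : p02 * p13 = p01 * p23 + p03 * p12 := by
      rw [hp01, hp02, hp03, hp12, hp13, hp23]; ring
    have h1 : -‖p02 * p13‖ ≤ ((starRingEnd ℂ) p02 * p13).re := by
      have h := Complex.abs_re_le_norm ((starRingEnd ℂ) p02 * p13)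
      have habs : ‖(starRingEnd ℂ) p02 * p13‖ = ‖p02 * p13‖ := by
        simp [map_mul]
      rw [habs] at h
      rcases abs_le.mp h with ⟨hl, _⟩
      linarith
    have h2 : ‖p02 * p13‖ ≤
        ‖p01‖ * ‖p23‖ + ‖p03‖ * ‖p12‖ := by
      rw [hpl]
      calc ‖p01 * p23 + p03 * p12‖
          ≤ ‖p01 * p23‖ + ‖p03 * p12‖ := norm_add_le _ _
        _ = ‖p01‖ * ‖p23‖ + ‖p03‖ * ‖p12‖ := by
            simp [map_mul]
    have hn : ∀ z : ℂ, Complex.normSq z = ‖z‖ ^ 2 := fun z => (Complex.sq_norm z).symm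
    rw [hr, hn, hn, hn, hn]
    nlinarith [sq_nonneg (‖p01‖ - ‖p23‖),
      sq_nonneg (‖p03‖ - ‖p12‖),
      norm_nonneg p01, norm_nonneg p23,
      norm_nonneg p03, norm_nonneg p12]
  refine ⟨r, hdet, hle, ?_⟩
  intro hli
  have hne : r ≠ 0 := by
    intro h0
    have hd : (Matrix.of fun i k : Fin 4 => ![v₁, v₂, Jq v₁, Jq v₂] k i).det ≠ 0 := by
      have hu : IsUnit (Matrix.of fun i k : Fin 4 => ![v₁, v₂, Jq v₁, Jq v₂] k i) :=
        Matrix.linearIndependent_cols_iff_isUnit.mp hli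
      exact isUnit_iff_ne_zero.mp ((Matrix.isUnit_iff_isUnit_det _).mp hu)
    rw [hdet, h0] at hd
    simp at hd
  exact lt_of_le_of_ne hle hne
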